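/- Let ε ≥ 0 and λ ≥ 1 be reals, and let a, b : E → ℝ≥0 and f, f* : E → ℝ≥0 on a finite set E satisfy Σ_e (a(e)f(e)² + b(e)f(e)) ≤ (1+ε)·Σ_e (a(e)f(e)f*(e) + b(e)f*(e)). Then ((4λ−1−ε)/(4λ))·Σ_e (a(e)f(e)² + b(e)f(e)) ≤ (1+ε)·λ·Σ_e (a(e)f*(e)² + b(e)f*(e)), provided 1+ε ≤ 4λ. -/

import Mathlib

theorem stmt_8 {E : Type*} [Fintype E] (ε lam : ℝ) (hε : 0 ≤ ε) (hlam : 1 ≤ lam)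
    (hεlam : 1 + ε ≤ 4 * lam)
    (a b f g : E → ℝ) (ha : ∀ e, 0 ≤ a e) (hb : ∀ e, 0 ≤ b e)
    (hf : ∀ e, 0 ≤ f e) (hg : ∀ e, 0 ≤ g e)
    (h : ∑ e : E, (a e * f e ^ 2 + b e * f e) ≤
      (1 + ε) * ∑ e : E, (a e * f e * g e + b e * g e)) :
    ((4 * lam - 1 - ε) / (4 * lam)) * ∑ e : E, (a e * f e ^ 2 + b e * f e) ≤
      (1 + ε) * lam * ∑ e : E, (a e * g e ^ 2 + b e * g e) := by
  have hlam0 : (0:ℝ) < 4 * lam := by linarith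
  set S := ∑ e : E, (a e * f e ^ 2 + b e * f e) with hS
  set T := ∑ e : E, (a e * g e ^ 2 + b e * g e) with hT
  have key : ∀ e : E, a e * f e * g e + b e * g e ≤
      a e * f e ^ 2 / (4 * lam) + lam * (a e * g e ^ 2 + b e * g e) := by
    intro e
    have h1 : 4 * lam * (f e * g e) ≤ f e ^ 2 + 4 * lam ^ 2 * g e ^ 2 := by
      nlinarith [sq_nonneg (f e - 2 * lam * g e)]
    have h2 : a e * f e * g e ≤ a e * f e ^ 2 / (4 * lam) + lam * (a e * g e ^ 2) := by
      rw [div_add' _ _ _ (ne_of_gt hlam0), le_div_iff₀ hlam0]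
      nlinarith [mul_le_mul_of_nonneg_left h1 (ha e)]
    have h3 : b e * g e ≤ lam * (b e * g e) :=
      le_mul_of_one_le_left (mul_nonneg (hb e) (hg e)) hlam
    nlinarith
  have hsum : ∑ e : E, (a e * f e * g e + b e * g e) ≤
      (∑ e : E, a e * f e ^ 2 / (4 * lam)) + lam * T := by
    rw [hT, Finset.mul_sum, ← Finset.sum_add_distrib]
    exact Finset.sum_le_sum fun e _ => key e
  have haf : ∑ e : E, a e * f e ^ 2 / (4 * lam) ≤ S / (4 * lam) := by
    rw [hS, Finset.sum_div]
    refine Finset.sum_le_sum fun e _ => ?_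
    gcongr
    nlinarith [mul_nonneg (hb e) (hf e)]
  have hS0 : 0 ≤ S := Finset.sum_nonneg fun e _ => by
    nlinarith [mul_nonneg (ha e) (sq_nonneg (f e)), mul_nonneg (hb e) (hf e)]
  have h1ε : (0:ℝ) ≤ 1 + ε := by linarith
  have hmain : S ≤ ((1 + ε) * S + (1 + ε) * lam * T * (4 * lam)) / (4 * lam) := by
    calc S ≤ (1 + ε) * ∑ e : E, (a e * f e * g e + b e * g e) := h
    _ ≤ (1 + ε) * ((∑ e : E, a e * f e ^ 2 / (4 * lam)) + lam * T) :=
        mul_le_mul_of_nonneg_left hsum h1ε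
    _ ≤ (1 + ε) * (S / (4 * lam) + lam * T) := by
        apply mul_le_mul_of_nonneg_left _ h1ε; linarith
    _ = ((1 + ε) * S + (1 + ε) * lam * T * (4 * lam)) / (4 * lam) := by
        field_simp
  rw [le_div_iff₀ hlam0] at hmain
  rw [div_mul_eq_mul_div, div_le_iff₀ hlam0]
  nlinarith [hmain]
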